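/- arXiv:1705.06131 — 2 statements merged into one kernel-verified Lean document; each statement's English description precedes it below -/
import Mathlib

section
/- Let C₁₂, C₁₃ > 0, t₀ ∈ ℝ, and let y : (t₀,∞) → ℝ be a nonnegative differentiable function satisfying y'(t) + C₁₂ y(t)² ≤ C₁₃ for all t > t₀. Then y(t) ≤ 2/(C₁₂ (t - t₀)) + √(2 C₁₃ / C₁₂) for all t > t₀. -/
open Set Filter Topology

/-- If `f a < 0` and at every zero of `f` in `[a,b]` the derivative is strictly
negative, then `f b < 0` (no upcrossing of zero). -/
lemma no_upcrossing (f : ℝ → ℝ) (a b : ℝ) (hab : a ≤ b)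
    (hd : ∀ s ∈ Set.Icc a b, DifferentiableAt ℝ f s)
    (ha : f a < 0)
    (hzero : ∀ s ∈ Set.Icc a b, f s = 0 → deriv f s < 0) :
    f b < 0 := by
  by_contra hb
  push_neg at hb
  have hcont : ContinuousOn f (Set.Icc a b) :=
    fun s hs => (hd s hs).continuousAt.continuousWithinAt
  set S : Set ℝ := Set.Icc a b ∩ f ⁻¹' Set.Ici 0 with hS
  have hSclosed : IsClosed S :=
    hcont.preimage_isClosed_of_isClosed isClosed_Icc isClosed_Ici
  have hne : S.Nonempty := ⟨b, ⟨hab, le_refl b⟩, hb⟩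
  have hbdd : BddBelow S := ⟨a, fun s hs => hs.1.1⟩
  set c := sInf S with hc
  have hcS : c ∈ S := hSclosed.csInf_mem hne hbdd
  have hfc : 0 ≤ f c := hcS.2
  have hac : a < c := by
    rcases lt_or_eq_of_le hcS.1.1 with h | h
    · exact h
    · exact absurd (h ▸ hfc) (not_le.2 ha)
  have hlt : ∀ s, a ≤ s → s < c → f s < 0 := by
    intro s h1 h2
    by_contra h
    push_neg at h
    exact absurd (csInf_le hbdd ⟨⟨h1, h2.le.trans hcS.1.2⟩, h⟩) (not_le.2 h2)
  -- f c = 0 by continuity from the left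
  have hfc0 : f c = 0 := by
    have hcc : ContinuousAt f c := (hd c hcS.1).continuousAt
    have hmem : Set.Ioo a c ∈ 𝓝[<] c := Ioo_mem_nhdsLT_of_mem ⟨hac, le_refl c⟩
    have htend : Tendsto f (𝓝[<] c) (𝓝 (f c)) :=
      hcc.continuousWithinAt.tendsto
    have hle : f c ≤ 0 := by
      refine le_of_tendsto htend ?_
      filter_upwards [hmem] with s hs
      exact (hlt s hs.1.le hs.2).le
    linarith
  -- derivative at c is nonneg (left difference quotients), contradiction
  have hdc : HasDerivAt f (deriv f c) c := (hd c hcS.1).hasDerivAt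
  rw [hasDerivAt_iff_tendsto_slope] at hdc
  have h2 : Tendsto (slope f c) (𝓝[<] c) (𝓝 (deriv f c)) :=
    hdc.mono_left (nhdsWithin_mono c fun x hx => ne_of_lt hx)
  have h3 : 0 ≤ deriv f c := by
    refine ge_of_tendsto h2 ?_
    filter_upwards [Ioo_mem_nhdsLT_of_mem (⟨hac, le_refl c⟩ : c ∈ Set.Ioc a c)]
      with s hs
    have hfs : f s < 0 := hlt s hs.1.le hs.2
    rw [slope_def_field, hfc0, sub_zero]
    refine div_nonneg_iff.2 (Or.inr ⟨hfs.le, ?_⟩)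
    linarith [hs.2]
  exact absurd (hzero c hcS.1 hfc0) (not_lt.2 h3)

theorem riccati_comparison
    (C₁₂ C₁₃ t₀ : ℝ) (h12 : 0 < C₁₂) (h13 : 0 < C₁₃)
    (y : ℝ → ℝ)
    (hy0 : ∀ t, t₀ < t → 0 ≤ y t)
    (hydiff : ∀ t, t₀ < t → DifferentiableAt ℝ y t)
    (hyineq : ∀ t, t₀ < t → deriv y t + C₁₂ * (y t) ^ 2 ≤ C₁₃) :
    ∀ t, t₀ < t → y t ≤ 2 / (C₁₂ * (t - t₀)) + Real.sqrt (2 * C₁₃ / C₁₂) := by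
  intro t ht
  set b := Real.sqrt (2 * C₁₃ / C₁₂) with hbdef
  have hbnn : 0 ≤ b := Real.sqrt_nonneg _
  have hbsq : b ^ 2 = 2 * C₁₃ / C₁₂ := Real.sq_sqrt (by positivity)
  -- key shifted comparison
  have key : ∀ a, t₀ < a → a < t → y t ≤ 2 / (C₁₂ * (t - a)) + b := by
    intro a ha hat
    set Y : ℝ → ℝ := fun s => 2 / (C₁₂ * (s - a)) + b with hYdef
    have hYd : ∀ s, a < s → HasDerivAt Y (-(2 * C₁₂) / (C₁₂ * (s - a)) ^ 2) s := by
      intro s hs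
      have hu : 0 < s - a := sub_pos.2 hs
      have hne : C₁₂ * (s - a) ≠ 0 := ne_of_gt (by positivity)
      have h1 : HasDerivAt (fun s => C₁₂ * (s - a)) C₁₂ s := by
        simpa using ((hasDerivAt_id s).sub_const a).const_mul C₁₂
      have h2 := h1.inv hne
      have h3 := (h2.const_mul (2 : ℝ)).add_const b
      have hfun : Y = fun x => 2 * (C₁₂ * (x - a))⁻¹ + b := by
        funext x; simp [hYdef, div_eq_mul_inv]
      rw [hfun]
      exact h3.congr_deriv (by ring)
    -- strict supersolution property
    have hsup : ∀ s, a < s →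
        C₁₃ < -(2 * C₁₂) / (C₁₂ * (s - a)) ^ 2 + C₁₂ * (Y s) ^ 2 := by
      intro s hs
      have hu : 0 < s - a := sub_pos.2 hs
      have hYs : Y s = 2 / (C₁₂ * (s - a)) + b := rfl
      rw [hYs]
      have hne : C₁₂ * (s - a) ≠ 0 := ne_of_gt (by positivity)
      have hb2 : C₁₂ * b ^ 2 = 2 * C₁₃ := by
        rw [hbsq]; field_simp
      have hbpos : 0 ≤ b / (s - a) := by positivity
      have key2 : -(2 * C₁₂) / (C₁₂ * (s - a)) ^ 2 + C₁₂ * (2 / (C₁₂ * (s - a)) + b) ^ 2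
          = 2 / (C₁₂ * (s - a) ^ 2) + 4 * (b / (s - a)) + C₁₂ * b ^ 2 := by
        field_simp
        ring
      rw [key2, hb2]
      have : 0 < 2 / (C₁₂ * (s - a) ^ 2) := by positivity
      linarith
    -- bound y on the compact [a, t]
    have hsubset : Set.Icc a t ⊆ Set.Ioi t₀ := fun s hs => lt_of_lt_of_le ha hs.1
    have hyc : ContinuousOn y (Set.Icc a t) :=
      fun s hs => (hydiff s (hsubset hs)).continuousAt.continuousWithinAt
    obtain ⟨m, hm, hmax'⟩ := isCompact_Icc.exists_isMaxOn ⟨a, Set.mem_Icc.2 ⟨le_refl a, hat.le⟩⟩ hyc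
    have hmax : ∀ s ∈ Set.Icc a t, y s ≤ y m := fun s hs => hmax' hs
    set M := y m with hM
    have hM0 : 0 ≤ M := hy0 m (hsubset hm)
    set δ := min ((t - a) / 2) (2 / (C₁₂ * (M + 1))) with hδdef
    have hδpos : 0 < δ := lt_min (by linarith) (by positivity)
    set s₀ := a + δ with hs₀def
    have hs₀1 : a < s₀ := by simp [hs₀def]; linarith
    have hs₀2 : s₀ < t := by
      have := min_le_left ((t - a) / 2) (2 / (C₁₂ * (M + 1)))
      simp only [hs₀def]
      have : δ ≤ (t - a) / 2 := min_le_left _ _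
      linarith
    have hys₀ : y s₀ < Y s₀ := by
      have h1 : y s₀ ≤ M := hmax s₀ ⟨hs₀1.le, hs₀2.le⟩
      have hδ2 : δ ≤ 2 / (C₁₂ * (M + 1)) := min_le_right _ _
      rw [le_div_iff₀ (by positivity)] at hδ2
      have h2 : M + 1 ≤ 2 / (C₁₂ * δ) := by
        rw [le_div_iff₀ (by positivity)]
        nlinarith
      have h3 : Y s₀ = 2 / (C₁₂ * δ) + b := by
        simp only [hYdef, hs₀def, add_sub_cancel_left]
      rw [h3]
      linarith
    -- crossing lemma for f = y - Y
    have hft : y t - Y t < 0 := by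
      apply no_upcrossing (fun s => y s - Y s) s₀ t hs₀2.le
      · intro s hs
        have h1 : a < s := lt_of_lt_of_le hs₀1 hs.1
        exact (hydiff s (lt_trans ha h1)).sub (hYd s h1).differentiableAt
      · simpa using sub_neg.2 hys₀
      · intro s hs hfs
        have h1 : a < s := lt_of_lt_of_le hs₀1 hs.1
        have ht₀s : t₀ < s := lt_trans ha h1
        have hdY : deriv Y s = -(2 * C₁₂) / (C₁₂ * (s - a)) ^ 2 := (hYd s h1).deriv
        have hds : deriv (fun s => y s - Y s) s = deriv y s - deriv Y s :=
          deriv_sub (hydiff s ht₀s) (hYd s h1).differentiableAt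
        rw [hds, hdY]
        have hys : y s = Y s := by
          have := sub_eq_zero.1 hfs
          exact this
        have h2 := hyineq s ht₀s
        rw [hys] at h2
        have h3 := hsup s h1
        have h4 : deriv y s ≤ C₁₃ - C₁₂ * Y s ^ 2 := by linarith
        have h5 : C₁₃ - C₁₂ * Y s ^ 2 < -(2 * C₁₂) / (C₁₂ * (s - a)) ^ 2 := by
          linarith
        have h6 : deriv y s < -(2 * C₁₂) / (C₁₂ * (s - a)) ^ 2 := lt_of_le_of_lt h4 h5
        linarith [h6]
    have hft' : y t - (2 / (C₁₂ * (t - a)) + b) < 0 := hft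
    linarith
  -- pass to the limit a → t₀⁺
  have htend : Tendsto (fun a : ℝ => 2 / (C₁₂ * (t - a)) + b) (𝓝[>] t₀)
      (𝓝 (2 / (C₁₂ * (t - t₀)) + b)) := by
    have hc : ContinuousAt (fun a : ℝ => 2 / (C₁₂ * (t - a)) + b) t₀ := by
      apply ContinuousAt.add _ continuousAt_const
      apply ContinuousAt.div continuousAt_const (by fun_prop)
      have : 0 < t - t₀ := sub_pos.2 ht
      positivity
    exact hc.continuousWithinAt.tendsto
  have hev : ∀ᶠ a in 𝓝[>] t₀, y t ≤ 2 / (C₁₂ * (t - a)) + b := by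
    filter_upwards [Ioo_mem_nhdsGT_of_mem ⟨le_refl t₀, ht⟩] with a haa
    exact key a haa.1 haa.2
  exact ge_of_tendsto htend hev
end

section
/- Let Ω be a measure space of finite measure, n ∈ L²(Ω) positive with ∫_Ω n = ∫_Ω n̄ where n̄ > 0 is constant. Then 0 ≤ ∫_Ω n (ln n - ln n̄) ≤ (1/n̄) · ‖n‖_{L²} · ‖n - n̄‖_{L²}. -/
open MeasureTheory

lemma entropy_key1 (x c : ℝ) (hx : 0 < x) (hc : 0 < c) :
    x - c ≤ x * (Real.log x - Real.log c) := by
  have h := Real.log_le_sub_one_of_pos (div_pos hc hx)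
  rw [Real.log_div hc.ne' hx.ne'] at h
  have h2 : x * (Real.log c - Real.log x) ≤ x * (c / x - 1) :=
    mul_le_mul_of_nonneg_left h hx.le
  have h3 : x * (c / x - 1) = c - x := by field_simp
  have h4 : x * (Real.log x - Real.log c) = -(x * (Real.log c - Real.log x)) := by ring
  linarith

lemma entropy_key2 (x c : ℝ) (hx : 0 < x) (hc : 0 < c) :
    x * (Real.log x - Real.log c) ≤ x * (x - c) / c := by
  have h := Real.log_le_sub_one_of_pos (div_pos hx hc)
  rw [Real.log_div hx.ne' hc.ne'] at h
  have h2 : x * (Real.log x - Real.log c) ≤ x * (x / c - 1) :=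
    mul_le_mul_of_nonneg_left h hx.le
  have h3 : x * (x / c - 1) = x * (x - c) / c := by field_simp
  linarith

theorem quantitative_entropy_estimate
    (d : ℕ) (Ω : Set (EuclideanSpace ℝ (Fin d))) (hΩ : MeasurableSet Ω)
    (hfin : volume Ω ≠ ⊤)
    (n : EuclideanSpace ℝ (Fin d) → ℝ) (hn : ∀ x ∈ Ω, 0 < n x)
    (hn2 : IntegrableOn (fun x => (n x) ^ 2) Ω)
    (hnlog : IntegrableOn (fun x => n x * Real.log (n x)) Ω)
    (nbar : ℝ) (hnbar : 0 < nbar)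
    (hmass : ∫ x in Ω, n x = nbar * (volume Ω).toReal) :
    0 ≤ ∫ x in Ω, n x * (Real.log (n x) - Real.log nbar) ∧
    (∫ x in Ω, n x * (Real.log (n x) - Real.log nbar))
      ≤ (1 / nbar) * Real.sqrt (∫ x in Ω, (n x) ^ 2)
          * Real.sqrt (∫ x in Ω, (n x - nbar) ^ 2) := by
  haveI : IsFiniteMeasure (volume.restrict Ω) :=
    ⟨by rwa [Measure.restrict_apply_univ, lt_top_iff_ne_top]⟩
  have hae : ∀ᵐ x ∂(volume.restrict Ω), 0 < n x :=
    (ae_restrict_iff' hΩ).2 (ae_of_all _ hn)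
  -- measurability of n
  have hsm : AEStronglyMeasurable n (volume.restrict Ω) := by
    have heq : (fun x => Real.sqrt ((n x) ^ 2)) =ᵐ[volume.restrict Ω] n := by
      filter_upwards [hae] with x hx
      rw [Real.sqrt_sq hx.le]
    exact (Real.continuous_sqrt.comp_aestronglyMeasurable hn2.1).congr heq
  have hmem2 : MemLp n 2 (volume.restrict Ω) := (memLp_two_iff_integrable_sq hsm).2 hn2
  have hnint : IntegrableOn n Ω := hmem2.integrable (by norm_num)
  have hcint : IntegrableOn (fun _ => nbar) Ω :=
    integrableOn_const hfin
  -- integrability of the entropy integrand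
  have I1 : IntegrableOn (fun x => n x * (Real.log (n x) - Real.log nbar)) Ω := by
    have heq : (fun x => n x * (Real.log (n x) - Real.log nbar))
        = fun x => n x * Real.log (n x) - Real.log nbar * n x := by ext x; ring
    rw [heq]; exact hnlog.sub (hnint.const_mul _)
  have I0 : IntegrableOn (fun x => n x - nbar) Ω := hnint.sub hcint
  have Imul : IntegrableOn (fun x => n x * (n x - nbar)) Ω := by
    have heq : (fun x => n x * (n x - nbar)) = fun x => (n x) ^ 2 - nbar * n x := by
      ext x; ring
    rw [heq]; exact hn2.sub (hnint.const_mul _)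
  have I2 : IntegrableOn (fun x => n x * (n x - nbar) / nbar) Ω := Imul.div_const _
  constructor
  · -- lower bound
    have hzero : (∫ x in Ω, (n x - nbar)) = 0 := by
      rw [integral_sub hnint hcint, setIntegral_const, hmass]
      simp [mul_comm, Measure.real]
    have := setIntegral_mono_on I0 I1 hΩ (fun x hx => entropy_key1 (n x) nbar (hn x hx) hnbar)
    linarith [hzero ▸ this]
  · -- upper bound
    have step1 : (∫ x in Ω, n x * (Real.log (n x) - Real.log nbar))
        ≤ ∫ x in Ω, n x * (n x - nbar) / nbar :=
      setIntegral_mono_on I1 I2 hΩ (fun x hx => entropy_key2 (n x) nbar (hn x hx) hnbar)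
    have Iabs : IntegrableOn (fun x => n x * |n x - nbar|) Ω := by
      refine Imul.abs.congr ?_
      filter_upwards [hae] with x hx
      rw [abs_mul, abs_of_nonneg hx.le]
    have step3 : (∫ x in Ω, n x * (n x - nbar)) ≤ ∫ x in Ω, n x * |n x - nbar| :=
      setIntegral_mono_on Imul Iabs hΩ
        (fun x hx => mul_le_mul_of_nonneg_left (le_abs_self _) (hn x hx).le)
    -- Hölder (Cauchy–Schwarz)
    have hgmem : MemLp (fun x => |n x - nbar|) 2 (volume.restrict Ω) :=
      (hmem2.sub (memLp_const nbar)).abs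
    have hpq : Real.HolderConjugate 2 2 := ⟨by norm_num, by norm_num, by norm_num⟩
    have hnn1 : 0 ≤ᵐ[volume.restrict Ω] n := by filter_upwards [hae] with x hx; exact hx.le
    have hnn2 : 0 ≤ᵐ[volume.restrict Ω] (fun x => |n x - nbar|) :=
      ae_of_all _ fun x => abs_nonneg _
    have hmem2' : MemLp n (ENNReal.ofReal 2) (volume.restrict Ω) := by
      simpa using hmem2
    have hgmem' : MemLp (fun x => |n x - nbar|) (ENNReal.ofReal 2) (volume.restrict Ω) := by
      simpa using hgmem
    have holder := integral_mul_le_Lp_mul_Lq_of_nonneg hpq hnn1 hnn2 hmem2' hgmem'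
    have e1 : (∫ x in Ω, n x ^ (2 : ℝ)) = ∫ x in Ω, (n x) ^ 2 := by
      refine integral_congr_ae (ae_of_all _ fun x => ?_)
      show n x ^ (2:ℝ) = n x ^ 2
      rw [show (2:ℝ) = ((2:ℕ):ℝ) by norm_num, Real.rpow_natCast]
    have e2 : (∫ x in Ω, |n x - nbar| ^ (2 : ℝ)) = ∫ x in Ω, (n x - nbar) ^ 2 := by
      refine integral_congr_ae (ae_of_all _ fun x => ?_)
      show |n x - nbar| ^ (2:ℝ) = (n x - nbar) ^ 2
      rw [show (2:ℝ) = ((2:ℕ):ℝ) by norm_num, Real.rpow_natCast, sq_abs]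
    rw [e1, e2, ← Real.sqrt_eq_rpow, ← Real.sqrt_eq_rpow] at holder
    have step4 : (∫ x in Ω, n x * |n x - nbar|)
        ≤ Real.sqrt (∫ x in Ω, (n x) ^ 2) * Real.sqrt (∫ x in Ω, (n x - nbar) ^ 2) := holder
    have step2 : (∫ x in Ω, n x * (n x - nbar) / nbar)
        = (1 / nbar) * ∫ x in Ω, n x * (n x - nbar) := by
      rw [integral_div]; ring
    have : (∫ x in Ω, n x * (Real.log (n x) - Real.log nbar))
        ≤ (1 / nbar) * (Real.sqrt (∫ x in Ω, (n x) ^ 2)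
            * Real.sqrt (∫ x in Ω, (n x - nbar) ^ 2)) := by
      calc (∫ x in Ω, n x * (Real.log (n x) - Real.log nbar))
          ≤ (1 / nbar) * ∫ x in Ω, n x * (n x - nbar) := by rw [← step2]; exact step1
        _ ≤ _ := by
            apply mul_le_mul_of_nonneg_left _ (by positivity)
            exact le_trans step3 step4
    linarith [this]
end
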